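/- arXiv:1510.07096 — 2 statements merged into one kernel-verified Lean document; each statement's English description precedes it below -/
import Mathlib

section
/- Let r ≥ 5, ε > 0, let n ≥ 1 be a real number and set T = n^{2 − α_r − ε} with α_r = (r−2)/(C(r,2)−2). Let 𝒞 be a minimal chain cover of an r-element vertex set A, consisting of ℓ ≥ 1 chains and having total cost c and total benefit b. Then T^ℓ · n^{−c} ≤ n^{−α_r b − ε}. -/
open Finset

private lemma two_mul_choose_two : ∀ m : ℕ, 2 * m.choose 2 = m * (m - 1)
  | 0 => rfl
  | 1 => rfl
  | (m + 2) => by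
      have ih := two_mul_choose_two (m + 1)
      have h : (m + 2).choose 2 = (m + 1) + (m + 1).choose 2 := by
        rw [Nat.choose_succ_succ]; norm_num
      rw [h]
      have e1 : m + 2 - 1 = m + 1 := rfl
      have e2 : m + 1 - 1 = m := rfl
      rw [e1]; rw [e2] at ih
      nlinarith [ih]

private lemma card_pairs {V : Type*} [DecidableEq V] (s : Finset V) :
    (s.sym2.filter fun p => ¬ p.IsDiag).card = s.card.choose 2 := by
  have h1 : (s.sym2.filter fun p => p.IsDiag) = s.image Sym2.diag := by
    ext p
    induction p using Sym2.ind with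
    | _ a b =>
      simp only [mem_filter, Finset.mk_mem_sym2_iff, Sym2.mk_isDiag_iff, mem_image]
      constructor
      · rintro ⟨⟨ha, _⟩, rfl⟩; exact ⟨a, ha, rfl⟩
      · rintro ⟨c, hc, h⟩
        have : s(c, c) = s(a, b) := h
        rw [Sym2.eq_iff] at this
        rcases this with ⟨rfl, rfl⟩ | ⟨rfl, rfl⟩ <;> exact ⟨⟨hc, hc⟩, rfl⟩
  have h2 := Finset.card_filter_add_card_filter_not
    (s := s.sym2) (p := fun p : Sym2 V => p.IsDiag)
  rw [h1, Finset.card_image_of_injective _ Sym2.diag_injective, Finset.card_sym2] at h2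
  have h3 : (s.card + 1).choose 2 = s.card + s.card.choose 2 := by
    rw [Nat.choose_succ_succ, Nat.choose_one_right]
  omega

private lemma keyZ (Q Vv Dz Az : ℤ) (hq : 3 ≤ Q) (hv : 0 ≤ Vv) (hvq : Vv + 1 ≤ Q)
    (hS : 2 * Az = (Vv + 2) * (Vv + 1)) (hD : 2 * Dz + 2 = Q * Q + 3 * Q) :
    ∀ t : ℤ, t = 0 ∨ t = 1 ∨ t = 2 →
      Q * Az + Dz * t ≤ Dz * (Vv + 2) + Q * (t * (t - 1) / 2) := by
  rintro t (rfl | rfl | rfl)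
  · norm_num
    nlinarith [mul_nonneg (mul_nonneg (by linarith : (0:ℤ) ≤ Q) (by linarith : (0:ℤ) ≤ Q - Vv - 1)) (by linarith : (0:ℤ) ≤ Vv + 2)]
  · norm_num
    nlinarith [mul_nonneg (by linarith : (0:ℤ) ≤ Vv + 1) (by nlinarith : (0:ℤ) ≤ Q * (Q - Vv - 1) + (Q - 2))]
  · norm_num
    nlinarith [mul_nonneg (mul_nonneg hv (by linarith : (0:ℤ) ≤ Q)) (by linarith : (0:ℤ) ≤ Q - Vv - 1),
      mul_nonneg hv (by linarith : (0:ℤ) ≤ Q - 2)]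

private lemma key (r s t : ℕ) (hr : 5 ≤ r) (hs2 : 2 ≤ s) (hsr : s ≤ r - 1)
    (ht : t ≤ 2) (hts : t ≤ s) :
    (r - 2) * s.choose 2 + (r.choose 2 - 2) * t ≤ (r.choose 2 - 2) * s + (r - 2) * t.choose 2 := by
  obtain ⟨q, rfl⟩ : ∃ q, r = q + 2 := ⟨r - 2, by omega⟩
  have hq : 3 ≤ q := by omega
  have hR := two_mul_choose_two (q + 2)
  have hS := two_mul_choose_two s
  have e1 : q + 2 - 1 = q + 1 := rfl
  rw [e1] at hR
  have h20 : 20 ≤ (q + 2) * (q + 1) := by nlinarith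
  have hR10 : 10 ≤ (q + 2).choose 2 := by omega
  obtain ⟨D, hD⟩ : ∃ D, (q + 2).choose 2 = D + 2 := ⟨(q + 2).choose 2 - 2, by omega⟩
  rw [hD] at hR ⊢
  simp only [Nat.add_sub_cancel]
  obtain ⟨v, rfl⟩ : ∃ v, s = v + 2 := ⟨s - 2, by omega⟩
  have hvq : v + 3 ≤ q + 2 := by omega
  have e2 : v + 2 - 1 = v + 1 := rfl
  rw [e2] at hS
  have hSz : (2 : ℤ) * ((v + 2).choose 2 : ℤ) = ((v : ℤ) + 2) * ((v : ℤ) + 1) := by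
    exact_mod_cast congrArg (Nat.cast : ℕ → ℤ) hS
  have hDz2 : (2 : ℤ) * (D : ℤ) + 2 = (q : ℤ) * q + 3 * q := by
    have h := congrArg (Nat.cast : ℕ → ℤ) hR
    push_cast at h
    linarith
  have hq' : (3 : ℤ) ≤ (q : ℤ) := by exact_mod_cast hq
  have hv' : (0 : ℤ) ≤ (v : ℤ) := by positivity
  have hvq' : (v : ℤ) + 1 ≤ (q : ℤ) := by exact_mod_cast (show v + 1 ≤ q by omega)
  have main := keyZ (q : ℤ) (v : ℤ) (D : ℤ) ((v + 2).choose 2 : ℤ) hq' hv' hvq' hSz hDz2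
  have hch : (t.choose 2 : ℤ) = (t : ℤ) * ((t : ℤ) - 1) / 2 := by
    interval_cases t <;> norm_num
  have := main (t : ℤ) (by interval_cases t <;> norm_num)
  rw [← hch] at this
  exact_mod_cast this


/-- The cost `c(C)` of the chain `C = (S 0, …, S (k-1))`: `|S 0| + Σ_{i<k-1} |S (i+1) \ S i|`. -/
def chainCost {V : Type*} [DecidableEq V] (k : ℕ) (S : ℕ → Finset V) : ℕ :=
  (S 0).card + ∑ i ∈ Finset.range (k - 1), (S (i + 1) \ S i).card

/-- The benefit `b(C)` of the chain `C = (S 0, …, S (k-1))`: the number of (unordered) pairs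
of distinct vertices spanned by at least one of the sets `S i`. -/
def chainBenefit {V : Type*} [DecidableEq V] (k : ℕ) (S : ℕ → Finset V) : ℕ :=
  (((Finset.range k).biUnion fun i => (S i).sym2).filter fun p => ¬ p.IsDiag).card

private lemma chain_ineq {V : Type*} [DecidableEq V] (r : ℕ) (hr : 5 ≤ r) (S : ℕ → Finset V) :
    ∀ k, 1 ≤ k →
    (∀ i < k, 2 ≤ (S i).card ∧ (S i).card ≤ r - 1) →
    (∀ i, i + 1 < k → (S i ∩ S (i + 1)).card ≤ 2) →
    (r - 2) * chainBenefit k S + 2 * (r.choose 2 - 2) ≤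
      (r.choose 2 - 2) * chainCost k S + (r - 2) := by
  intro k
  induction k with
  | zero => omega
  | succ m ih =>
    intro _ hcard hconsec
    rcases Nat.eq_zero_or_pos m with rfl | hm
    · -- base case k = 1
      have hb : chainBenefit 1 S = (S 0).card.choose 2 := by
        rw [chainBenefit, Finset.range_one, Finset.singleton_biUnion, card_pairs]
      have hc : chainCost 1 S = (S 0).card := by
        simp [chainCost]
      rw [hb, hc]
      have h0 := hcard 0 (by omega)
      have := key r (S 0).card 2 hr h0.1 h0.2 le_rfl h0.1
      simpa [Nat.mul_comm] using this
    · obtain ⟨p, rfl⟩ : ∃ p, m = p + 1 := ⟨m - 1, by omega⟩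
      have ihp := ih (by omega) (fun i hi => hcard i (by omega)) (fun i hi => hconsec i (by omega))
      set t := (S p ∩ S (p + 1)).card with htdef
      have ht2 : t ≤ 2 := hconsec p (by omega)
      have hts : t ≤ (S (p + 1)).card :=
        Finset.card_le_card (Finset.inter_subset_right)
      have hcardp1 := hcard (p + 1) (by omega)
      -- cost step
      have hc : chainCost (p + 2) S + t = chainCost (p + 1) S + (S (p + 1)).card := by
        rw [chainCost, chainCost]
        have e1 : p + 2 - 1 = p + 1 := rfl
        have e2 : p + 1 - 1 = p := rfl
        rw [e1, e2, Finset.sum_range_succ]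
        have := Finset.card_inter_add_card_sdiff (S (p + 1)) (S p)
        rw [Finset.inter_comm] at this
        omega
      -- benefit step
      have hb : chainBenefit (p + 2) S + t.choose 2 ≤
          chainBenefit (p + 1) S + (S (p + 1)).card.choose 2 := by
        rw [chainBenefit, chainBenefit]
        have e3 : Finset.range (p + 2) = insert (p + 1) (Finset.range (p + 1)) := by
          rw [Finset.range_add_one]
        rw [e3, Finset.biUnion_insert, Finset.filter_union]
        set B := (((Finset.range (p + 1)).biUnion fun i => (S i).sym2).filter
          fun p => ¬ p.IsDiag) with hB
        set P := ((S (p + 1)).sym2.filter fun p => ¬ p.IsDiag) with hP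
        have hun := Finset.card_union_add_card_inter P B
        have hsubI : ((S p ∩ S (p + 1)).sym2.filter fun q => ¬ q.IsDiag) ⊆ P ∩ B := by
          intro x hx
          rw [Finset.mem_filter] at hx
          rw [Finset.mem_inter, hP, hB, Finset.mem_filter, Finset.mem_filter]
          refine ⟨⟨Finset.sym2_mono Finset.inter_subset_right hx.1, hx.2⟩, ?_, hx.2⟩
          apply Finset.mem_biUnion.2 ⟨p, Finset.mem_range.2 (by omega), ?_⟩
          exact Finset.sym2_mono Finset.inter_subset_left hx.1
        have hIcard : t.choose 2 ≤ (P ∩ B).card := by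
          rw [← card_pairs (S p ∩ S (p + 1))]
          exact Finset.card_le_card hsubI
        have hPcard : P.card = (S (p + 1)).card.choose 2 := card_pairs _
        omega
      -- combine
      have hkey := key r (S (p + 1)).card t hr hcardp1.1 hcardp1.2 ht2 hts
      set q := r - 2
      set D := r.choose 2 - 2
      set b' := chainBenefit (p + 2) S
      set b := chainBenefit (p + 1) S
      set c' := chainCost (p + 2) S
      set c := chainCost (p + 1) S
      set s1 := (S (p + 1)).card
      have h1 : q * b' + q * t.choose 2 ≤ q * b + q * s1.choose 2 := by
        have := Nat.mul_le_mul_left q hb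
        rw [Nat.mul_add, Nat.mul_add] at this
        exact this
      have h5 : D * c' + D * t = D * c + D * s1 := by
        have := congrArg (fun x => D * x) hc
        simp only [Nat.mul_add] at this
        exact this
      linarith [h1, hkey, ihp, h5]

/-- Corollary: let `𝒞 = (C 0, …, C (ℓ-1))` be a minimal chain cover of an `r`-set `A`
(`r ≥ 5`), where the `j`-th chain is `S j 0, …, S j (k j - 1)`, with total cost `c` and total
benefit `b`.  Then, for any real `n ≥ 1` and `ε > 0`, setting `T = n^(2 - α_r - ε)` where
`α_r = (r-2)/(C(r,2)-2)`, we have `T^ℓ · n^(-c) ≤ n^(-α_r b - ε)`. -/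
theorem cost_benefit_cover {V : Type*} [DecidableEq V] (r : ℕ) (hr : 5 ≤ r)
    (ε : ℝ) (hε : 0 < ε) (n : ℝ) (hn : 1 ≤ n)
    (A : Finset V) (hA : A.card = r)
    (ℓ : ℕ) (hℓ : 1 ≤ ℓ) (k : ℕ → ℕ) (S : ℕ → ℕ → Finset V)
    (hk : ∀ j < ℓ, 1 ≤ k j)
    (hsub : ∀ j < ℓ, ∀ i < k j, S j i ⊆ A)
    (hcard : ∀ j < ℓ, ∀ i < k j, 2 ≤ (S j i).card ∧ (S j i).card ≤ r - 1)
    (hconsec : ∀ j < ℓ, ∀ i, i + 1 < k j → (S j i ∩ S j (i + 1)).card ≤ 2)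
    (hmin : ∀ j < ℓ, ∀ i < k j, ∃ u ∈ S j i, ∃ v ∈ S j i, u ≠ v ∧
      ∀ j' < ℓ, ∀ i' < k j', ¬(j' = j ∧ i' = i) → ¬(u ∈ S j' i' ∧ v ∈ S j' i')) :
    (n ^ (2 - ((r : ℝ) - 2) / ((r.choose 2 : ℝ) - 2) - ε)) ^ ℓ *
        n ^ (-((∑ j ∈ Finset.range ℓ, chainCost (k j) (S j) : ℕ) : ℝ)) ≤
      n ^ (-(((r : ℝ) - 2) / ((r.choose 2 : ℝ) - 2) *
            ((∑ j ∈ Finset.range ℓ, chainBenefit (k j) (S j) : ℕ) : ℝ)) - ε) := by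
  have hsum : (r - 2) * (∑ j ∈ Finset.range ℓ, chainBenefit (k j) (S j)) +
      2 * (r.choose 2 - 2) * ℓ ≤
      (r.choose 2 - 2) * (∑ j ∈ Finset.range ℓ, chainCost (k j) (S j)) + (r - 2) * ℓ := by
    have h1 : ∀ x : ℕ → ℕ, ∀ a : ℕ,
        a * (∑ j ∈ Finset.range ℓ, x j) + (∑ j ∈ Finset.range ℓ, (1:ℕ)) * 0 =
          ∑ j ∈ Finset.range ℓ, a * x j := by
      intro x a; rw [Finset.mul_sum]; simp
    have hle : ∑ j ∈ Finset.range ℓ, ((r - 2) * chainBenefit (k j) (S j) + 2 * (r.choose 2 - 2))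
        ≤ ∑ j ∈ Finset.range ℓ, ((r.choose 2 - 2) * chainCost (k j) (S j) + (r - 2)) := by
      refine Finset.sum_le_sum fun j hj => ?_
      have hjl := Finset.mem_range.1 hj
      exact chain_ineq r hr (S j) (k j) (hk j hjl) (hcard j hjl) (hconsec j hjl)
    calc (r - 2) * (∑ j ∈ Finset.range ℓ, chainBenefit (k j) (S j)) + 2 * (r.choose 2 - 2) * ℓ
        = ∑ j ∈ Finset.range ℓ, ((r - 2) * chainBenefit (k j) (S j) + 2 * (r.choose 2 - 2)) := by
          rw [Finset.sum_add_distrib, ← Finset.mul_sum, Finset.sum_const, Finset.card_range,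
            smul_eq_mul]
          ring
      _ ≤ ∑ j ∈ Finset.range ℓ, ((r.choose 2 - 2) * chainCost (k j) (S j) + (r - 2)) := hle
      _ = (r.choose 2 - 2) * (∑ j ∈ Finset.range ℓ, chainCost (k j) (S j)) + (r - 2) * ℓ := by
          rw [Finset.sum_add_distrib, ← Finset.mul_sum, Finset.sum_const, Finset.card_range,
            smul_eq_mul]
          ring
  set b : ℕ := ∑ j ∈ Finset.range ℓ, chainBenefit (k j) (S j) with hbdef
  set c : ℕ := ∑ j ∈ Finset.range ℓ, chainCost (k j) (S j) with hcdef
  have hRch : 10 ≤ r.choose 2 := by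
    calc 10 = Nat.choose 5 2 := by decide
    _ ≤ r.choose 2 := Nat.choose_le_choose 2 hr
  have hDpos : (0 : ℝ) < (r.choose 2 : ℝ) - 2 := by
    have : (10 : ℝ) ≤ (r.choose 2 : ℝ) := by exact_mod_cast hRch
    linarith
  have hs : ((r : ℝ) - 2) * b + 2 * ((r.choose 2 : ℝ) - 2) * ℓ ≤
      ((r.choose 2 : ℝ) - 2) * c + ((r : ℝ) - 2) * ℓ := by
    have h := (Nat.cast_le (α := ℝ)).2 hsum
    push_cast [Nat.cast_sub (show 2 ≤ r by omega), Nat.cast_sub (show 2 ≤ r.choose 2 by omega)] at h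
    linarith
  set α : ℝ := ((r : ℝ) - 2) / ((r.choose 2 : ℝ) - 2) with hαdef
  have hα1 : α * ((r.choose 2 : ℝ) - 2) = (r : ℝ) - 2 := div_mul_cancel₀ _ hDpos.ne'
  have hkey2 : α * b + 2 * ℓ ≤ c + α * ℓ := by
    rw [← hα1] at hs
    have h2 : ((r.choose 2 : ℝ) - 2) * (α * b + 2 * ℓ) ≤
        ((r.choose 2 : ℝ) - 2) * (c + α * ℓ) := by ring_nf; ring_nf at hs; linarith
    exact (mul_le_mul_iff_right₀ hDpos).1 h2
  have hl1 : (1 : ℝ) ≤ (ℓ : ℝ) := by exact_mod_cast hℓ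
  have hexp : (2 - α - ε) * ℓ + (-(c : ℝ)) ≤ -(α * b) - ε := by
    nlinarith [hkey2, mul_nonneg hε.le (sub_nonneg.2 hl1)]
  have hn0 : (0 : ℝ) < n := lt_of_lt_of_le one_pos hn
  calc (n ^ (2 - α - ε)) ^ ℓ * n ^ (-(c : ℝ))
      = n ^ ((2 - α - ε) * ℓ) * n ^ (-(c : ℝ)) := by
        rw [← Real.rpow_natCast (n ^ (2 - α - ε)) ℓ, ← Real.rpow_mul hn0.le]
    _ = n ^ ((2 - α - ε) * ℓ + (-(c : ℝ))) := (Real.rpow_add hn0 _ _).symm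
    _ ≤ n ^ (-(α * b) - ε) := Real.rpow_le_rpow_of_exponent_le hn hexp
end

section
/- For all integers r ≥ 4 and n ≥ r, the maximum running time of the K_r-bootstrap percolation process satisfies M_r(n) ≥ ⌊(n − 2)/(r − 2)⌋. -/
/-- One step of the `K_r`-bootstrap percolation process: we add every edge `uv` for which
there is an `r`-element vertex set `S` containing `u` and `v` such that every edge within `S`
other than `uv` is already present. -/
def bootStep {V : Type*} (r : ℕ) (G : SimpleGraph V) : SimpleGraph V where
  Adj u v := G.Adj u v ∨ (u ≠ v ∧ ∃ S : Finset V, S.card = r ∧ u ∈ S ∧ v ∈ S ∧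
    ∀ x ∈ S, ∀ y ∈ S, x ≠ y → ¬((x = u ∧ y = v) ∨ (x = v ∧ y = u)) → G.Adj x y)
  symm := by
    constructor
    intro a b h
    rcases h with h | ⟨hne, S, hS, ha, hb, hall⟩
    · exact Or.inl h.symm
    · refine Or.inr ⟨hne.symm, S, hS, hb, ha, ?_⟩
      intro x hx y hy hxy hno
      exact hall x hx y hy hxy (by tauto)
  loopless := by
    constructor
    intro a h
    rcases h with h | ⟨hne, _⟩
    · exact G.irrefl h
    · exact hne rfl

/-- The maximum running time `M_r(n)`: the largest `t` such that some initially infected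
graph `G` on `n` vertices satisfies `G_t ≠ G_{t-1}` in the `K_r`-bootstrap process. -/
noncomputable def maxRunTime (r n : ℕ) : ℕ :=
  sSup {t | ∃ G : SimpleGraph (Fin n), (bootStep r)^[t] G ≠ (bootStep r)^[t - 1] G}


lemma le_bootStep {V : Type*} (r : ℕ) (G : SimpleGraph V) : G ≤ bootStep r G :=
  fun _ _ h => Or.inl h

lemma bootStep_mono {V : Type*} (r : ℕ) {G H : SimpleGraph V} (h : G ≤ H) :
    bootStep r G ≤ bootStep r H := by
  intro u v hyp
  rcases hyp with h1 | ⟨hne, S, hS, hu, hv, hall⟩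
  · exact Or.inl (h h1)
  · exact Or.inr ⟨hne, S, hS, hu, hv, fun x hx y hy hxy hno => h (hall x hx y hy hxy hno)⟩

/-- adjacency in the block family: `x < y`, both in block `i = 1..t`
(interval `[(i-1)(r-2), i(r-2)+2)`), and if the pair is `e_k = {k(r-2), k(r-2)+1}`
then `k ≤ j`. -/
def HAdj (r t j x y : ℕ) : Prop :=
  x < y ∧ (∃ i, 1 ≤ i ∧ i ≤ t ∧ (i-1)*(r-2) ≤ x ∧ y < i*(r-2)+2) ∧
    ∀ k, x = k*(r-2) → y = k*(r-2)+1 → k ≤ j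

def Hg (r n t j : ℕ) : SimpleGraph (Fin n) where
  Adj u v := HAdj r t j u.val v.val ∨ HAdj r t j v.val u.val
  symm := ⟨fun _ _ h => Or.symm h⟩
  loopless := ⟨fun a h => by rcases h with h|h <;> exact absurd h.1 (lt_irrefl _)⟩

lemma Hg_mono (r n t : ℕ) {j j' : ℕ} (h : j ≤ j') : Hg r n t j ≤ Hg r n t j' := by
  intro u v hyp
  rcases hyp with ⟨h1, h2, h3⟩ | ⟨h1, h2, h3⟩
  · exact Or.inl ⟨h1, h2, fun k hk1 hk2 => le_trans (h3 k hk1 hk2) h⟩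
  · exact Or.inr ⟨h1, h2, fun k hk1 hk2 => le_trans (h3 k hk1 hk2) h⟩

/-- adjacency for the r = 4 invariant family (blocks plus "shortcut" edges). -/
def FAdj (t j x y : ℕ) : Prop :=
  x < y ∧ y < 2*t+2 ∧ (y < 2*j+2 ∨ (y ≤ x + 2 + y % 2 ∧ ¬(y % 2 = 1 ∧ y = x + 1)))

def Fg (n t j : ℕ) : SimpleGraph (Fin n) where
  Adj u v := FAdj t j u.val v.val ∨ FAdj t j v.val u.val
  symm := ⟨fun _ _ h => Or.symm h⟩
  loopless := ⟨fun a h => by rcases h with h|h <;> exact absurd h.1 (lt_irrefl _)⟩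

lemma HAdj_in_block (r t j : ℕ) (hr : 4 ≤ r) (hjt : j+1 ≤ t) {p q : ℕ}
    (hp : j*(r-2) ≤ p) (hq : q < (j+1)*(r-2)+2) (hpq : p < q)
    (hne : ¬(p = (j+1)*(r-2) ∧ q = (j+1)*(r-2)+1)) : HAdj r t j p q := by
  refine ⟨hpq, ⟨j+1, by omega, hjt, by simpa using hp, hq⟩, ?_⟩
  intro k hk1 hk2
  have hd : 0 < r - 2 := by omega
  have h1 : j ≤ k := by
    have := hp; rw [hk1] at this
    exact Nat.le_of_mul_le_mul_right this hd
  have h2 : k ≤ j + 1 := by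
    have : k*(r-2) ≤ (j+1)*(r-2) := by omega
    exact Nat.le_of_mul_le_mul_right this hd
  rcases Nat.eq_or_lt_of_le h2 with h3 | h3
  · exact absurd ⟨by rw [hk1, h3], by rw [hk2, h3]⟩ hne
  · omega

lemma Hg_succ_le_boot (r n t j : ℕ) (hr : 4 ≤ r) (hn : t*(r-2)+2 ≤ n) :
    Hg r n t (j+1) ≤ bootStep r (Hg r n t j) := by
  have hd : 0 < r - 2 := by omega
  -- core claim for ordered pairs
  have core : ∀ a b : Fin n, HAdj r t (j+1) a.val b.val → (bootStep r (Hg r n t j)).Adj a b := by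
    intro a b ⟨hxy, ⟨i, hi1, hit, hlo, hhi⟩, hforb⟩
    by_cases hforbj : ∀ k, a.val = k*(r-2) → b.val = k*(r-2)+1 → k ≤ j
    · exact Or.inl (Or.inl ⟨hxy, ⟨i, hi1, hit, hlo, hhi⟩, hforbj⟩)
    push_neg at hforbj
    obtain ⟨k, hk1, hk2, hk3⟩ := hforbj
    have hkj : k = j + 1 := le_antisymm (hforb k hk1 hk2) (by omega)
    subst hkj
    -- derive j+1 ≤ t from the block
    have hjt : j + 1 ≤ t := by
      have h1 : (j+1)*(r-2) < i*(r-2) + 1 := by omega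
      have h2 : j+1 ≤ i := by
        have : (j+1)*(r-2) ≤ i*(r-2) := by omega
        exact Nat.le_of_mul_le_mul_right this hd
      omega
    have hmem : ∀ m ∈ Finset.Ico (j*(r-2)) ((j+1)*(r-2)+2), m < n := by
      intro m hm
      rw [Finset.mem_Ico] at hm
      have : (j+1)*(r-2) ≤ t*(r-2) := Nat.mul_le_mul_right _ hjt
      omega
    refine Or.inr ⟨fun h => (by omega : a.val ≠ b.val) (congrArg Fin.val h), 
      (Finset.Ico (j*(r-2)) ((j+1)*(r-2)+2)).attachFin hmem, ?_, ?_, ?_, ?_⟩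
    · rw [Finset.card_attachFin, Nat.card_Ico]
      have : (j+1)*(r-2) = j*(r-2) + (r-2) := by ring
      omega
    · rw [Finset.mem_attachFin, Finset.mem_Ico, hk1]
      constructor
      · have : j*(r-2) ≤ (j+1)*(r-2) := Nat.mul_le_mul_right _ (by omega)
        omega
      · omega
    · rw [Finset.mem_attachFin, Finset.mem_Ico, hk2]
      constructor
      · have : j*(r-2) ≤ (j+1)*(r-2) := Nat.mul_le_mul_right _ (by omega)
        omega
      · omega
    · intro x hx y hy hne hnuv
      rw [Finset.mem_attachFin, Finset.mem_Ico] at hx hy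
      rcases lt_trichotomy x.val y.val with hlt | heq | hgt
      · refine Or.inl (HAdj_in_block r t j hr hjt hx.1 hy.2 hlt ?_)
        rintro ⟨e1, e2⟩
        exact hnuv (Or.inl ⟨Fin.val_injective (e1.trans hk1.symm), 
          Fin.val_injective (e2.trans hk2.symm)⟩)
      · exact absurd (Fin.val_injective heq) hne
      · refine Or.inr (HAdj_in_block r t j hr hjt hy.1 hx.2 hgt ?_)
        rintro ⟨e1, e2⟩
        exact hnuv (Or.inr ⟨Fin.val_injective (e2.trans hk2.symm), 
          Fin.val_injective (e1.trans hk1.symm)⟩)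
  intro u v h
  rcases h with h | h
  · exact core u v h
  · exact (core v u h).symm

lemma Hg_le_iter (r n t : ℕ) (hr : 4 ≤ r) (hn : t*(r-2)+2 ≤ n) (j : ℕ) :
    Hg r n t j ≤ (bootStep r)^[j] (Hg r n t 0) := by
  induction j with
  | zero => exact le_refl _
  | succ j ih =>
    rw [Function.iterate_succ_apply']
    exact le_trans (Hg_succ_le_boot r n t j hr hn) (bootStep_mono r ih)

lemma Fg_mono (n t : ℕ) {j j' : ℕ} (h : j ≤ j') : Fg n t j ≤ Fg n t j' := by
  intro u v hyp
  unfold Fg FAdj at *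
  rcases hyp with ⟨h1, h2, h3⟩ | ⟨h1, h2, h3⟩
  · exact Or.inl ⟨h1, h2, by omega⟩
  · exact Or.inr ⟨h1, h2, by omega⟩

lemma Hg_le_Fg (n t j : ℕ) : Hg 4 n t j ≤ Fg n t j := by
  have core : ∀ x y : ℕ, HAdj 4 t j x y → FAdj t j x y := by
    rintro x y ⟨hxy, ⟨i, hi1, hit, hlo, hhi⟩, hforb⟩
    norm_num at hlo hhi
    refine ⟨hxy, by omega, ?_⟩
    by_cases hp : y % 2 = 1 ∧ y = x + 1
    · have := hforb (x/2) (by omega) (by omega)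
      omega
    · right
      exact ⟨by omega, hp⟩
  intro u v h
  rcases h with h | h
  · exact Or.inl (core _ _ h)
  · exact Or.inr (core _ _ h)

/-- t-free window form -/
def WAdj (j x y : ℕ) : Prop :=
  x < y ∧ (y < 2*j+2 ∨ (y ≤ x + 2 + y % 2 ∧ ¬(y % 2 = 1 ∧ y = x + 1)))

lemma key0 (j u v w1 w2 : ℕ) (e2 : u ≠ w1) (e3 : u ≠ w2)
    (e4 : v ≠ w1) (e5 : v ≠ w2) (e6 : w1 ≠ w2) (huv : u < v) (hv : 2*j+4 ≤ v)
    (a1 : WAdj j u w1 ∨ WAdj j w1 u) (a2 : WAdj j u w2 ∨ WAdj j w2 u)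
    (a3 : WAdj j v w1 ∨ WAdj j w1 v) (a4 : WAdj j v w2 ∨ WAdj j w2 v)
    (a5 : WAdj j w1 w2 ∨ WAdj j w2 w1) :
    WAdj (j+1) u v := by
  simp only [WAdj] at *
  rcases a1 with a1|a1 <;> rcases a2 with a2|a2 <;> rcases a3 with a3|a3 <;>
    rcases a4 with a4|a4 <;> rcases a5 with a5|a5 <;> omega

lemma FAdj_toW {t j x y : ℕ} (h : FAdj t j x y) : WAdj j x y := by
  unfold FAdj WAdj at *; omega

lemma key_s17 (t j u v w1 w2 : ℕ) (e1 : u ≠ v) (e2 : u ≠ w1) (e3 : u ≠ w2)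
    (e4 : v ≠ w1) (e5 : v ≠ w2) (e6 : w1 ≠ w2)
    (a1 : FAdj t j u w1 ∨ FAdj t j w1 u) (a2 : FAdj t j u w2 ∨ FAdj t j w2 u)
    (a3 : FAdj t j v w1 ∨ FAdj t j w1 v) (a4 : FAdj t j v w2 ∨ FAdj t j w2 v)
    (a5 : FAdj t j w1 w2 ∨ FAdj t j w2 w1) :
    FAdj t (j+1) u v ∨ FAdj t (j+1) v u := by
  have b1 := a1.imp FAdj_toW FAdj_toW
  have b2 := a2.imp FAdj_toW FAdj_toW
  have b3 := a3.imp FAdj_toW FAdj_toW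
  have b4 := a4.imp FAdj_toW FAdj_toW
  have b5 := a5.imp FAdj_toW FAdj_toW
  have hb1 : u < 2*t+2 ∧ v < 2*t+2 := by unfold FAdj at a1 a2 a3 a4; omega
  by_cases hb : (u < v ∧ v < 2*j+4) ∨ (v < u ∧ u < 2*j+4)
  · unfold FAdj; omega
  rcases Nat.lt_or_ge u v with h | h
  · have := key0 j u v w1 w2 e2 e3 e4 e5 e6 h (by omega) b1 b2 b3 b4 b5
    unfold FAdj WAdj at *; omega
  · have h' : v < u := by omega
    have := key0 j v u w1 w2 e4 e5 e2 e3 e6 h' (by omega) b3 b4 b1 b2 b5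
    unfold FAdj WAdj at *; omega

lemma Fg_boot_le (n t j : ℕ) : bootStep 4 (Fg n t j) ≤ Fg n t (j+1) := by
  intro u v h
  rcases h with h | ⟨hne, T, hcard, hu, hv, hall⟩
  · exact Fg_mono n t (Nat.le_succ j) h
  · -- extract the two other vertices
    have hvu : v ∈ T.erase u := Finset.mem_erase.2 ⟨fun h => hne h.symm, hv⟩
    have hc2 : ((T.erase u).erase v).card = 2 := by
      rw [Finset.card_erase_of_mem hvu, Finset.card_erase_of_mem hu, hcard]
    obtain ⟨w1, hw1⟩ := Finset.card_pos.1 (by omega : 0 < ((T.erase u).erase v).card)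
    have hc1 : 0 < (((T.erase u).erase v).erase w1).card := by
      rw [Finset.card_erase_of_mem hw1]; omega
    obtain ⟨w2, hw2⟩ := Finset.card_pos.1 hc1
    have hw2' : w2 ∈ (T.erase u).erase v := Finset.mem_of_mem_erase hw2
    have hw12 : w2 ≠ w1 := Finset.ne_of_mem_erase hw2
    have hw1v : w1 ≠ v := Finset.ne_of_mem_erase hw1
    have hw1u : w1 ≠ u := Finset.ne_of_mem_erase (Finset.mem_of_mem_erase hw1)
    have hw2v : w2 ≠ v := Finset.ne_of_mem_erase hw2'
    have hw2u : w2 ≠ u := Finset.ne_of_mem_erase (Finset.mem_of_mem_erase hw2')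
    have hw1T : w1 ∈ T := Finset.mem_of_mem_erase (Finset.mem_of_mem_erase hw1)
    have hw2T : w2 ∈ T := Finset.mem_of_mem_erase (Finset.mem_of_mem_erase hw2')
    -- the five adjacency facts
    have a1 := hall u hu w1 hw1T (Ne.symm hw1u) (by tauto)
    have a2 := hall u hu w2 hw2T (Ne.symm hw2u) (by tauto)
    have a3 := hall v hv w1 hw1T (Ne.symm hw1v) (by tauto)
    have a4 := hall v hv w2 hw2T (Ne.symm hw2v) (by tauto)
    have a5 := hall w1 hw1T w2 hw2T (Ne.symm hw12) (by tauto)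
    have e1 : u.val ≠ v.val := fun h => hne (Fin.val_injective h)
    have e2 : u.val ≠ w1.val := fun h => hw1u (Fin.val_injective h.symm)
    have e3 : u.val ≠ w2.val := fun h => hw2u (Fin.val_injective h.symm)
    have e4 : v.val ≠ w1.val := fun h => hw1v (Fin.val_injective h.symm)
    have e5 : v.val ≠ w2.val := fun h => hw2v (Fin.val_injective h.symm)
    have e6 : w1.val ≠ w2.val := fun h => hw12 (Fin.val_injective h.symm)
    simp only [Fg] at a1 a2 a3 a4 a5 ⊢
    exact key_s17 t j u.val v.val w1.val w2.val e1 e2 e3 e4 e5 e6 a1 a2 a3 a4 a5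

lemma iter_le_Fg (n t : ℕ) (j : ℕ) : (bootStep 4)^[j] (Hg 4 n t 0) ≤ Fg n t j := by
  induction j with
  | zero => exact Hg_le_Fg n t 0
  | succ j ih =>
    rw [Function.iterate_succ_apply']
    exact le_trans (bootStep_mono 4 ih) (Fg_boot_le n t j)

lemma Hg_boot_le5 (r n t j : ℕ) (hr : 5 ≤ r) :
    bootStep r (Hg r n t j) ≤ Hg r n t (j+1) := by
  have hd : 3 ≤ r - 2 := by omega
  have hd0 : 0 < r - 2 := by omega
  intro u v h
  rcases h with h | ⟨hne, T, hTcard, huT, hvT, hall⟩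
  · exact Hg_mono r n t (Nat.le_succ j) h
  have main : ∀ a b : Fin n, a ∈ T → b ∈ T → a.val < b.val →
      (∀ x ∈ T, ∀ y ∈ T, x ≠ y → ¬((x = a ∧ y = b) ∨ (x = b ∧ y = a)) →
        (Hg r n t j).Adj x y) →
      HAdj r t (j+1) a.val b.val := by
    intro a b haT hbT hab hall
    have hadjT : ∀ x ∈ T, ∀ y ∈ T, x.val < y.val → ¬(x = a ∧ y = b) →
        HAdj r t j x.val y.val := by
      intro x hx y hy hxy hno
      have hne' : x ≠ y := fun h => absurd (congrArg Fin.val h) (by omega)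
      have hnuv : ¬((x = a ∧ y = b) ∨ (x = b ∧ y = a)) := by
        rintro (h | ⟨h1, h2⟩)
        · exact hno h
        · subst h1; subst h2; omega
      rcases hall x hx y hy hne' hnuv with h | h
      · exact h
      · exact absurd h.1 (by omega)
    set V : Finset ℕ := T.image Fin.val with hVdef
    have hV : V.card = r := by
      rw [hVdef, Finset.card_image_of_injective _ Fin.val_injective, hTcard]
    have hVne : V.Nonempty := Finset.card_pos.1 (by omega)
    set p := V.min' hVne with hpdef
    set q := V.max' hVne with hqdef
    have hVsub : V ⊆ Finset.Icc p q := fun m hm =>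
      Finset.mem_Icc.2 ⟨Finset.min'_le V m hm, Finset.le_max' V m hm⟩
    have hpq : p + (r - 1) ≤ q := by
      have h1 := Finset.card_le_card hVsub
      rw [Nat.card_Icc, hV] at h1
      omega
    obtain ⟨P, hPT, hPval⟩ : ∃ P ∈ T, P.val = p := by
      obtain ⟨P, h1, h2⟩ := Finset.mem_image.1 (V.min'_mem hVne)
      exact ⟨P, h1, h2⟩
    obtain ⟨Q, hQT, hQval⟩ : ∃ Q ∈ T, Q.val = q := by
      obtain ⟨Q, h1, h2⟩ := Finset.mem_image.1 (V.max'_mem hVne)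
      exact ⟨Q, h1, h2⟩
    have haV : a.val ∈ V := Finset.mem_image_of_mem _ haT
    have hbV : b.val ∈ V := Finset.mem_image_of_mem _ hbT
    have hap : p ≤ a.val ∧ a.val ≤ q := Finset.mem_Icc.1 (hVsub haV)
    have hbp : p ≤ b.val ∧ b.val ≤ q := Finset.mem_Icc.1 (hVsub hbV)
    -- if some block [ (i-1)d, i d + 2 ) contains both p and q, we are done
    have claim2final : ∀ i, 1 ≤ i → i ≤ t → (i-1)*(r-2) ≤ p → q < i*(r-2)+2 →
        HAdj r t (j+1) a.val b.val := by
      intro i hi1 hit hip hiq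
      obtain ⟨m, rfl⟩ : ∃ m, i = m + 1 := ⟨i - 1, by omega⟩
      have hmd : (m+1-1)*(r-2) = m*(r-2) := by norm_num
      rw [hmd] at hip
      have hmul1 : (m+1)*(r-2) = m*(r-2) + (r-2) := by ring
      have hmul2 : (m+2)*(r-2) = m*(r-2) + (r-2) + (r-2) := by ring
      refine ⟨hab, ⟨m+1, by omega, hit, by rw [hmd]; omega, by omega⟩, ?_⟩
      intro k hk1 hk2
      by_contra hkj
      push_neg at hkj
      -- k = m or k = m+1
      have hkm : m ≤ k := by
        have h1 : m*(r-2) ≤ k*(r-2) := by omega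
        exact Nat.le_of_mul_le_mul_right h1 hd0
      have hkm2 : k ≤ m+1 := by
        have h1 : k*(r-2) ≤ (m+1)*(r-2) := by omega
        exact Nat.le_of_mul_le_mul_right h1 hd0
      -- V is the whole block
      have hVsub2 : V ⊆ Finset.Ico (m*(r-2)) ((m+1)*(r-2)+2) := by
        intro x hx
        have := Finset.mem_Icc.1 (hVsub hx)
        rw [Finset.mem_Ico]
        omega
      have hVI : V = Finset.Ico (m*(r-2)) ((m+1)*(r-2)+2) :=
        Finset.eq_of_subset_of_card_le hVsub2 (by rw [Nat.card_Ico, hV]; omega)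
      -- extract element with a given value in the block
      have getel : ∀ c, m*(r-2) ≤ c → c < (m+1)*(r-2)+2 → ∃ x ∈ T, x.val = c := by
        intro c h1 h2
        have : c ∈ V := by rw [hVI, Finset.mem_Ico]; exact ⟨h1, h2⟩
        obtain ⟨x, hx1, hx2⟩ := Finset.mem_image.1 this
        exact ⟨x, hx1, hx2⟩
      rcases (by omega : k = m ∨ k = m+1) with hk | hk <;> rw [hk] at hk1 hk2 hkj
      · -- pair is e_m; the pair e_{m+1} is elsewhere in the block and was present
        obtain ⟨x, hxT, hxval⟩ := getel ((m+1)*(r-2)) (by omega) (by omega)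
        obtain ⟨y, hyT, hyval⟩ := getel ((m+1)*(r-2)+1) (by omega) (by omega)
        have hxa : ¬(x = a ∧ y = b) := by
          rintro ⟨rfl, -⟩
          omega
        have h5 := hadjT x hxT y hyT (by omega) hxa
        have h6 := h5.2.2 (m+1) (by omega) (by omega)
        omega
      · -- pair is e_{m+1}; the pair e_m is elsewhere in the block and was present
        obtain ⟨x, hxT, hxval⟩ := getel (m*(r-2)) (by omega) (by omega)
        obtain ⟨y, hyT, hyval⟩ := getel (m*(r-2)+1) (by omega) (by omega)
        have hxa : ¬(x = a ∧ y = b) := by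
          rintro ⟨rfl, -⟩
          omega
        have h5 := hadjT x hxT y hyT (by omega) hxa
        have h6 := h5.2.2 m (by omega) (by omega)
        omega
    by_cases hPQ : P = a ∧ Q = b
    · -- min and max are exactly the completed pair; analyze middle vertices
      obtain ⟨rfl, rfl⟩ := hPQ
      -- bundle of facts for a middle vertex
      have getw : ∀ w ∈ T, w ≠ P → w ≠ Q → HAdj r t (j+1) P.val Q.val ∨
          (∃ m, m*(r-2) ≤ p ∧ p < (m+1)*(r-2) ∧ (m+1)*(r-2)+2 ≤ q ∧
            (m+1)*(r-2) ≤ w.val ∧ w.val < (m+1)*(r-2)+2) := by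
        intro w hwT hwa hwb
        have hwV : w.val ∈ V := Finset.mem_image_of_mem _ hwT
        have hwpq : p ≤ w.val ∧ w.val ≤ q := Finset.mem_Icc.1 (hVsub hwV)
        have hwp : w.val ≠ p := fun h =>
          hwa (Fin.val_injective (h.trans hPval.symm))
        have hwq : w.val ≠ q := fun h =>
          hwb (Fin.val_injective (h.trans hQval.symm))
        have h1 := hadjT P hPT w hwT (by omega) (fun h => hwb h.2)
        have h2 := hadjT w hwT Q hQT (by omega) (fun h => hwa h.1)
        obtain ⟨-, ⟨i1, hi11, hi1t, hlo1, hhi1⟩, -⟩ := h1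
        obtain ⟨-, ⟨i2, hi21, hi2t, hlo2, hhi2⟩, -⟩ := h2
        rw [hPval] at hlo1
        rw [hQval] at hhi2
        by_cases hc1 : q < i1*(r-2)+2
        · exact Or.inl (claim2final i1 hi11 hi1t hlo1 hc1)
        by_cases hc2 : (i2-1)*(r-2) ≤ p
        · exact Or.inl (claim2final i2 hi21 hi2t hc2 hhi2)
        push_neg at hc1
        push_neg at hc2
        right
        obtain ⟨m, rfl⟩ : ∃ m, i1 = m + 1 := ⟨i1 - 1, by omega⟩
        obtain ⟨m2, rfl⟩ : ∃ m2, i2 = m2 + 1 := ⟨i2 - 1, by omega⟩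
        have e1 : (m+1-1)*(r-2) = m*(r-2) := by norm_num
        have e2 : (m2+1-1)*(r-2) = m2*(r-2) := by norm_num
        rw [e1] at hlo1
        rw [e2] at hc2
        have hmul1 : (m+1)*(r-2) = m*(r-2) + (r-2) := by ring
        have hmul2 : (m+2)*(r-2) = m*(r-2) + (r-2) + (r-2) := by ring
        have hmul3 : (m2+1)*(r-2) = m2*(r-2) + (r-2) := by ring
        -- show m2 = m+1
        have hm2a : m2 ≤ m + 1 := by
          by_contra hcon
          have h3 : (m+2) ≤ m2 := by omega
          have h4 : (m+2)*(r-2) ≤ m2*(r-2) := Nat.mul_le_mul_right _ h3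
          omega
        have hm2b : m + 1 ≤ m2 := by
          by_contra hcon
          have h3 : m2 ≤ m := by omega
          have h4 : m2*(r-2) ≤ m*(r-2) := Nat.mul_le_mul_right _ h3
          omega
        have hm2 : m2 = m + 1 := by omega
        subst hm2
        have hmul4 : (m+1+1)*(r-2) = m*(r-2) + (r-2) + (r-2) := by ring
        exact ⟨m, by omega, by omega, by omega, by omega, by omega⟩
      -- three middle vertices
      have hQP : Q ≠ P := fun h => by
        rw [← hPval, ← hQval, h] at hpq
        omega
      have hQT' : Q ∈ T.erase P := Finset.mem_erase.2 ⟨hQP, hQT⟩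
      have hs2 : ((T.erase P).erase Q).card = r - 2 := by
        rw [Finset.card_erase_of_mem hQT', Finset.card_erase_of_mem hPT, hTcard]
        omega
      obtain ⟨w1, hw1⟩ := Finset.card_pos.1 (by omega : 0 < ((T.erase P).erase Q).card)
      obtain ⟨w2, hw2⟩ := Finset.card_pos.1
        (by rw [Finset.card_erase_of_mem hw1]; omega :
          0 < (((T.erase P).erase Q).erase w1).card)
      obtain ⟨w3, hw3⟩ := Finset.card_pos.1
        (by rw [Finset.card_erase_of_mem hw2, Finset.card_erase_of_mem hw1]; omega :
          0 < ((((T.erase P).erase Q).erase w1).erase w2).card)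
      have hw2' := Finset.mem_of_mem_erase hw2
      have hw3' := Finset.mem_of_mem_erase (Finset.mem_of_mem_erase hw3)
      have hw1T : w1 ∈ T := Finset.mem_of_mem_erase (Finset.mem_of_mem_erase hw1)
      have hw2T : w2 ∈ T := Finset.mem_of_mem_erase (Finset.mem_of_mem_erase hw2')
      have hw3T : w3 ∈ T := Finset.mem_of_mem_erase (Finset.mem_of_mem_erase hw3')
      have h12 : w1 ≠ w2 := (Finset.ne_of_mem_erase hw2).symm
      have h13 : w1 ≠ w3 := (Finset.ne_of_mem_erase (Finset.mem_of_mem_erase hw3)).symm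
      have h23 : w2 ≠ w3 := (Finset.ne_of_mem_erase hw3).symm
      rcases getw w1 hw1T (Finset.ne_of_mem_erase (Finset.mem_of_mem_erase hw1))
        (Finset.ne_of_mem_erase hw1) with hdone | ⟨m1, hm1⟩
      · exact hdone
      rcases getw w2 hw2T (Finset.ne_of_mem_erase (Finset.mem_of_mem_erase hw2'))
        (Finset.ne_of_mem_erase hw2') with hdone | ⟨m2, hm2⟩
      · exact hdone
      rcases getw w3 hw3T (Finset.ne_of_mem_erase (Finset.mem_of_mem_erase hw3'))
        (Finset.ne_of_mem_erase hw3') with hdone | ⟨m3, hm3⟩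
      · exact hdone
      -- all the mᵢ agree
      exfalso
      have heq12 : m1 = m2 := by
        have ha' : m1*(r-2) < (m2+1)*(r-2) := by omega
        have hb' : m2*(r-2) < (m1+1)*(r-2) := by omega
        have h1 : m1 < m2+1 := by
          by_contra hcon
          exact absurd (Nat.mul_le_mul_right (r-2) (by omega : m2+1 ≤ m1)) (by omega)
        have h2 : m2 < m1+1 := by
          by_contra hcon
          exact absurd (Nat.mul_le_mul_right (r-2) (by omega : m1+1 ≤ m2)) (by omega)
        omega
      have heq13 : m1 = m3 := by
        have ha' : m1*(r-2) < (m3+1)*(r-2) := by omega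
        have hb' : m3*(r-2) < (m1+1)*(r-2) := by omega
        have h1 : m1 < m3+1 := by
          by_contra hcon
          exact absurd (Nat.mul_le_mul_right (r-2) (by omega : m3+1 ≤ m1)) (by omega)
        have h2 : m3 < m1+1 := by
          by_contra hcon
          exact absurd (Nat.mul_le_mul_right (r-2) (by omega : m1+1 ≤ m3)) (by omega)
        omega
      subst heq12
      subst heq13
      -- three distinct values in a 2-element window: contradiction
      have d12 : w1.val ≠ w2.val := fun h => h12 (Fin.val_injective h)
      have d13 : w1.val ≠ w3.val := fun h => h13 (Fin.val_injective h)
      have d23 : w2.val ≠ w3.val := fun h => h23 (Fin.val_injective h)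
      omega
    · -- min and max are not the completed pair: they are adjacent, giving a block
      have hPQv : P.val < Q.val := by rw [hPval, hQval]; omega
      obtain ⟨-, ⟨i, hi1, hit, hlo, hhi⟩, -⟩ := hadjT P hPT Q hQT hPQv hPQ
      rw [hPval] at hlo
      rw [hQval] at hhi
      exact claim2final i hi1 hit hlo hhi
  rcases lt_trichotomy u.val v.val with h | h | h
  · exact Or.inl (main u v huT hvT h hall)
  · exact absurd (Fin.val_injective h) hne
  · refine Or.inr (main v u hvT huT h ?_)
    intro x hx y hy hxy hno
    exact hall x hx y hy hxy (by tauto)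

lemma iter_le_Hg (r n t : ℕ) (hr : 5 ≤ r) (j : ℕ) :
    (bootStep r)^[j] (Hg r n t 0) ≤ Hg r n t j := by
  induction j with
  | zero => exact le_refl _
  | succ j ih =>
    rw [Function.iterate_succ_apply']
    exact le_trans (bootStep_mono r ih) (Hg_boot_le5 r n t j hr)

lemma runSet_bdd (r n : ℕ) :
    BddAbove {t | ∃ G : SimpleGraph (Fin n), (bootStep r)^[t] G ≠ (bootStep r)^[t - 1] G} := by
  refine ⟨Nat.card (Sym2 (Fin n)), ?_⟩
  rintro t ⟨G, hG⟩
  rcases Nat.eq_zero_or_pos t with rfl | ht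
  · simp at hG
  have hstep : ∀ s, s < t → (bootStep r)^[s] G < (bootStep r)^[s+1] G := by
    intro s hs
    rw [Function.iterate_succ_apply']
    refine lt_of_le_of_ne (le_bootStep r _) ?_
    intro heq
    have hstab : ∀ m, (bootStep r)^[s + m] G = (bootStep r)^[s] G := by
      intro m
      induction m with
      | zero => rfl
      | succ m ih =>
        have : s + (m+1) = (s+m) + 1 := by omega
        rw [this, Function.iterate_succ_apply', ih, ← heq]
    apply hG
    obtain ⟨m, rfl⟩ : ∃ m, t = s + m + 1 := ⟨t - s - 1, by omega⟩
    have h2 : s + m + 1 - 1 = s + m := by omega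
    rw [h2, show s + m + 1 = s + (m+1) from by omega, hstab (m+1), hstab m]
  have hcard : ∀ s, s ≤ t → s ≤ ((bootStep r)^[s] G).edgeSet.ncard := by
    intro s
    induction s with
    | zero => intro _; exact Nat.zero_le _
    | succ s ih =>
      intro hs
      have hlt := hstep s (by omega)
      have hss : ((bootStep r)^[s] G).edgeSet ⊂ ((bootStep r)^[s+1] G).edgeSet :=
        SimpleGraph.edgeSet_ssubset_edgeSet.2 hlt
      have := Set.ncard_lt_ncard hss (Set.toFinite _)
      have := ih (by omega)
      omega
  have h1 := hcard t le_rfl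
  have h2 : ((bootStep r)^[t] G).edgeSet.ncard ≤ Nat.card (Sym2 (Fin n)) := by
    have := Set.ncard_le_ncard (Set.subset_univ ((bootStep r)^[t] G).edgeSet)
      (Set.toFinite _)
    rwa [Set.ncard_univ] at this
  omega

/-- For all integers `r ≥ 4` and `n ≥ r`, the maximum running time of the `K_r`-bootstrap
percolation process satisfies `M_r(n) ≥ ⌊(n-2)/(r-2)⌋`. -/
theorem maxRunTime_trivial_lower (r n : ℕ) (hr : 4 ≤ r) (hn : r ≤ n) :
    (n - 2) / (r - 2) ≤ maxRunTime r n := by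
  have hd0 : 0 < r - 2 := by omega
  set t := (n - 2) / (r - 2) with ht
  have ht1 : 1 ≤ t := by
    rw [ht, Nat.le_div_iff_mul_le hd0]
    omega
  have htmul : t * (r-2) ≤ n - 2 := by rw [ht]; exact Nat.div_mul_le_self _ _
  have htn : t * (r-2) + 2 ≤ n := by omega
  have hvlt : t * (r-2) + 1 < n := by omega
  set a : Fin n := ⟨t*(r-2), by omega⟩ with hadef
  set b : Fin n := ⟨t*(r-2)+1, hvlt⟩ with hbdef
  have havals : a.val = t*(r-2) := rfl
  have hbvals : b.val = t*(r-2)+1 := rfl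
  have hmemHg : (Hg r n t t).Adj a b := by
    refine Or.inl ⟨by omega, ⟨t, ht1, le_rfl, Nat.mul_le_mul_right _ (by omega), by omega⟩, ?_⟩
    intro k hk1 hk2
    rw [havals] at hk1
    exact Nat.le_of_mul_le_mul_right (le_of_eq hk1.symm) hd0
  have hin : ((bootStep r)^[t] (Hg r n t 0)).Adj a b :=
    Hg_le_iter r n t hr htn t hmemHg
  have hnot : ¬ ((bootStep r)^[t-1] (Hg r n t 0)).Adj a b := by
    intro hadj
    by_cases hr5 : 5 ≤ r
    · have h2 := iter_le_Hg r n t hr5 (t-1) hadj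
      rcases h2 with ⟨-, -, hforb⟩ | ⟨h1, -, -⟩
      · have := hforb t rfl rfl
        omega
      · rw [havals, hbvals] at h1
        omega
    · have hr4 : r = 4 := by omega
      subst hr4
      have h2 := iter_le_Fg n t (t-1) hadj
      rcases h2 with ⟨h1, h2, h3⟩ | ⟨h1, -, -⟩
      · rw [havals, hbvals] at *
        omega
      · rw [havals, hbvals] at h1
        omega
  have hne : (bootStep r)^[t] (Hg r n t 0) ≠ (bootStep r)^[t-1] (Hg r n t 0) :=
    fun h => hnot (h ▸ hin)
  exact le_csSup (runSet_bdd r n) ⟨Hg r n t 0, hne⟩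
end
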